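/- Let (Ω, K, P) be a probability space, A, B sub-σ-algebras, and ψ' = ψ'(A,B) ∈ (0,1]. Then for any mean-zero simple random variables X measurable with respect to A and Y measurable with respect to B, |E(XY)| ≤ (1 - ψ') ‖X‖₂ ‖Y‖₂. -/

import Mathlib

open MeasureTheory

section Aux
variable {Ω : Type*} [m : MeasurableSpace Ω]

private lemma aux_sum_indicator (X : SimpleFunc Ω ℝ) (F : ℝ → ℝ) (ω : Ω) :
    ∑ a ∈ X.range, (X ⁻¹' {a}).indicator (fun _ => F a) ω = F (X ω) := by
  rw [Finset.sum_eq_single_of_mem (X ω) (X.mem_range_self ω)]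
  · simp
  · intro b _ hb
    exact Set.indicator_of_notMem (by simpa using fun h => hb h.symm) _

private lemma aux_integral_comp (P : Measure Ω) [IsFiniteMeasure P]
    (X : SimpleFunc Ω ℝ) (F : ℝ → ℝ) :
    ∫ ω, F (X ω) ∂P = ∑ a ∈ X.range, F a * (P (X ⁻¹' {a})).toReal := by
  have : (fun ω => F (X ω))
      = fun ω => ∑ a ∈ X.range, (X ⁻¹' {a}).indicator (fun _ => F a) ω :=
    funext fun ω => (aux_sum_indicator X F ω).symm
  rw [this, integral_finset_sum _
    (fun a _ => (integrable_const (F a)).indicator (X.measurableSet_fiber a))]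
  refine Finset.sum_congr rfl fun a _ => ?_
  rw [integral_indicator_const _ (X.measurableSet_fiber a), smul_eq_mul, mul_comm, measureReal_def]

private lemma aux_marginal (P : Measure Ω) (Y : SimpleFunc Ω ℝ) (A : Set Ω) :
    ∑ b ∈ Y.range, P (A ∩ Y ⁻¹' {b}) = P A := by
  calc ∑ b ∈ Y.range, P (A ∩ Y ⁻¹' {b})
      = ∑ b ∈ Y.range, (P.restrict A) (Y ⁻¹' {b}) := by
        refine Finset.sum_congr rfl fun b _ => ?_
        rw [Measure.restrict_apply (Y.measurableSet_fiber b), Set.inter_comm]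
    _ = P.restrict A Set.univ := Y.sum_range_measure_preimage_singleton _
    _ = P A := by rw [Measure.restrict_apply_univ]

private lemma aux_integral_mul (P : Measure Ω) [IsFiniteMeasure P] (X Y : SimpleFunc Ω ℝ) :
    ∫ ω, X ω * Y ω ∂P = ∑ a ∈ X.range, ∑ b ∈ Y.range,
      (a * b) * (P (X ⁻¹' {a} ∩ Y ⁻¹' {b})).toReal := by
  have hptw : ∀ ω, X ω * Y ω = ∑ a ∈ X.range, ∑ b ∈ Y.range,
      (X ⁻¹' {a} ∩ Y ⁻¹' {b}).indicator (fun _ => a * b) ω := by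
    intro ω
    have h1 : ∀ a b : ℝ, (X ⁻¹' {a} ∩ Y ⁻¹' {b}).indicator (fun _ => a * b) ω
        = (X ⁻¹' {a}).indicator (fun _ => a) ω * (Y ⁻¹' {b}).indicator (fun _ => b) ω := by
      intro a b
      by_cases ha : ω ∈ X ⁻¹' {a} <;> by_cases hb : ω ∈ Y ⁻¹' {b} <;>
        simp [Set.indicator_of_mem, Set.indicator_of_notMem, ha, hb, Set.mem_inter_iff]
    simp_rw [h1, ← Finset.mul_sum, ← Finset.sum_mul]
    rw [aux_sum_indicator X (fun x => x) ω, aux_sum_indicator Y (fun x => x) ω]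
  calc ∫ ω, X ω * Y ω ∂P
      = ∫ ω, ∑ a ∈ X.range, ∑ b ∈ Y.range,
          (X ⁻¹' {a} ∩ Y ⁻¹' {b}).indicator (fun _ => a * b) ω ∂P :=
        integral_congr_ae (Filter.Eventually.of_forall hptw)
    _ = ∑ a ∈ X.range, ∑ b ∈ Y.range, (a * b) * (P (X ⁻¹' {a} ∩ Y ⁻¹' {b})).toReal := by
        rw [integral_finset_sum _ (fun a _ => integrable_finset_sum _ (fun b _ =>
          (integrable_const (a * b)).indicator
            ((X.measurableSet_fiber a).inter (Y.measurableSet_fiber b))))]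
        refine Finset.sum_congr rfl fun a _ => ?_
        rw [integral_finset_sum _ (fun b _ => (integrable_const (a * b)).indicator
          ((X.measurableSet_fiber a).inter (Y.measurableSet_fiber b)))]
        refine Finset.sum_congr rfl fun b _ => ?_
        rw [integral_indicator_const _ ((X.measurableSet_fiber a).inter
          (Y.measurableSet_fiber b)), smul_eq_mul, mul_comm, measureReal_def]

private lemma aux_eLpNorm_two (P : Measure Ω) [IsFiniteMeasure P] (X : SimpleFunc Ω ℝ) :
    (eLpNorm (fun ω => X ω) 2 P).toReal = Real.sqrt (∫ ω, (X ω) ^ 2 ∂P) := by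
  have hmem : MemLp (fun ω => X ω) 2 P := X.memLp_of_isFiniteMeasure 2 P
  rw [hmem.eLpNorm_eq_integral_rpow_norm two_ne_zero ENNReal.ofNat_ne_top]
  have h2 : (2 : ENNReal).toReal = (2 : ℝ) := by simp
  have hnorm : ∀ ω : Ω, ‖X ω‖ ^ (2 : ℝ) = (X ω) ^ 2 := fun ω => by
    rw [show (2 : ℝ) = ((2 : ℕ) : ℝ) by norm_num, Real.rpow_natCast, Real.norm_eq_abs, sq_abs]
  rw [ENNReal.toReal_ofReal (Real.rpow_nonneg
    (integral_nonneg fun ω => Real.rpow_nonneg (norm_nonneg _) _) _)]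
  rw [h2]
  simp_rw [hnorm]
  rw [show ((2:ℝ))⁻¹ = 1 / (2:ℝ) by norm_num, ← Real.sqrt_eq_rpow]

private def liftSF {Ω : Type*} (m 𝒜 : MeasurableSpace Ω) (h : 𝒜 ≤ m)
    (X : @SimpleFunc Ω 𝒜 ℝ) : @SimpleFunc Ω m ℝ :=
  @SimpleFunc.mk Ω m ℝ (@SimpleFunc.toFun Ω 𝒜 ℝ X)
    (fun x => h _ (@SimpleFunc.measurableSet_fiber' Ω 𝒜 ℝ X x))
    (@SimpleFunc.finite_range' Ω 𝒜 ℝ X)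
end Aux

/-- If `ψ' = ψ'(𝒜, ℬ) ∈ (0,1]`, then for mean-zero simple random variables `X`
(`𝒜`-measurable) and `Y` (`ℬ`-measurable), `|E(XY)| ≤ (1 - ψ') ‖X‖₂ ‖Y‖₂`. -/
theorem abs_integral_mul_le_of_psi_prime
    {Ω : Type*} {m : MeasurableSpace Ω} (P : Measure Ω) [IsProbabilityMeasure P]
    (𝒜 ℬ : MeasurableSpace Ω) (h𝒜 : 𝒜 ≤ m) (hℬ : ℬ ≤ m)
    (ψ' : ℝ)
    (hψdef : ψ' = sInf {r : ℝ | ∃ A B : Set Ω,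
        MeasurableSet[𝒜] A ∧ MeasurableSet[ℬ] B ∧
        0 < (P A).toReal * (P B).toReal ∧
        r = (P (A ∩ B)).toReal / ((P A).toReal * (P B).toReal)})
    (hψpos : 0 < ψ') (hψle : ψ' ≤ 1)
    (X : @SimpleFunc Ω 𝒜 ℝ) (Y : @SimpleFunc Ω ℬ ℝ)
    (hX : ∫ ω, X ω ∂P = 0) (hY : ∫ ω, Y ω ∂P = 0) :
    |∫ ω, X ω * Y ω ∂P| ≤
      (1 - ψ') * (eLpNorm (fun ω => X ω) 2 P).toReal *
        (eLpNorm (fun ω => Y ω) 2 P).toReal := by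
  classical
  letI : MeasurableSpace Ω := m
  set X' : SimpleFunc Ω ℝ := liftSF m 𝒜 h𝒜 X with hX'def
  set Y' : SimpleFunc Ω ℝ := liftSF m ℬ hℬ Y with hY'def
  show |∫ ω, X' ω * Y' ω ∂P| ≤
      (1 - ψ') * (eLpNorm (fun ω => X' ω) 2 P).toReal *
        (eLpNorm (fun ω => Y' ω) 2 P).toReal
  -- mean-zero sums
  have hX0 : ∑ a ∈ X'.range, a * (P (X' ⁻¹' {a})).toReal = 0 := by
    rw [← aux_integral_comp P X' (fun x => x)]; exact hX
  have hY0 : ∑ b ∈ Y'.range, b * (P (Y' ⁻¹' {b})).toReal = 0 := by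
    rw [← aux_integral_comp P Y' (fun x => x)]; exact hY
  -- total masses
  have hp1 : ∑ a ∈ X'.range, (P (X' ⁻¹' {a})).toReal = 1 := by
    have h := aux_marginal P X' Set.univ
    simp only [Set.univ_inter] at h
    rw [← ENNReal.toReal_sum (fun a _ => measure_ne_top P _), h, measure_univ,
      ENNReal.toReal_one]
  have hq1 : ∑ b ∈ Y'.range, (P (Y' ⁻¹' {b})).toReal = 1 := by
    have h := aux_marginal P Y' Set.univ
    simp only [Set.univ_inter] at h
    rw [← ENNReal.toReal_sum (fun b _ => measure_ne_top P _), h, measure_univ,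
      ENNReal.toReal_one]
  -- marginals
  have hmargX : ∀ a, ∑ b ∈ Y'.range, (P (X' ⁻¹' {a} ∩ Y' ⁻¹' {b})).toReal
      = (P (X' ⁻¹' {a})).toReal := by
    intro a
    rw [← ENNReal.toReal_sum (fun b _ => measure_ne_top P _), aux_marginal P Y' (X' ⁻¹' {a})]
  have hmargY : ∀ b, ∑ a ∈ X'.range, (P (X' ⁻¹' {a} ∩ Y' ⁻¹' {b})).toReal
      = (P (Y' ⁻¹' {b})).toReal := by
    intro b
    have h := aux_marginal P X' (Y' ⁻¹' {b})
    simp_rw [Set.inter_comm (Y' ⁻¹' {b})] at h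
    rw [← ENNReal.toReal_sum (fun a _ => measure_ne_top P _), h]
  -- the key ratio bound from the definition of ψ'
  have hratio : ∀ a b, ψ' * ((P (X' ⁻¹' {a})).toReal * (P (Y' ⁻¹' {b})).toReal)
      ≤ (P (X' ⁻¹' {a} ∩ Y' ⁻¹' {b})).toReal := by
    intro a b
    rcases (mul_nonneg (ENNReal.toReal_nonneg (a := P (X' ⁻¹' {a})))
      (ENNReal.toReal_nonneg (a := P (Y' ⁻¹' {b})))).eq_or_lt' with h | h
    · rw [h, mul_zero]; exact ENNReal.toReal_nonneg
    · have hmem : (P (X' ⁻¹' {a} ∩ Y' ⁻¹' {b})).toReal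
          / ((P (X' ⁻¹' {a})).toReal * (P (Y' ⁻¹' {b})).toReal) ∈ {u : ℝ | ∃ A B : Set Ω,
          MeasurableSet[𝒜] A ∧ MeasurableSet[ℬ] B ∧
          0 < (P A).toReal * (P B).toReal ∧
          u = (P (A ∩ B)).toReal / ((P A).toReal * (P B).toReal)} :=
        ⟨X' ⁻¹' {a}, Y' ⁻¹' {b},
          @SimpleFunc.measurableSet_fiber Ω ℝ 𝒜 X a,
          @SimpleFunc.measurableSet_fiber Ω ℝ ℬ Y b, h, rfl⟩
      have hbdd : BddBelow {u : ℝ | ∃ A B : Set Ω,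
          MeasurableSet[𝒜] A ∧ MeasurableSet[ℬ] B ∧
          0 < (P A).toReal * (P B).toReal ∧
          u = (P (A ∩ B)).toReal / ((P A).toReal * (P B).toReal)} := by
        refine ⟨0, fun u hu => ?_⟩
        obtain ⟨A, B, -, -, hpos, hu⟩ := hu
        rw [hu]
        exact div_nonneg ENNReal.toReal_nonneg hpos.le
      have hle : ψ' ≤ (P (X' ⁻¹' {a} ∩ Y' ⁻¹' {b})).toReal
          / ((P (X' ⁻¹' {a})).toReal * (P (Y' ⁻¹' {b})).toReal) :=
        hψdef ▸ csInf_le hbdd hmem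
      calc ψ' * ((P (X' ⁻¹' {a})).toReal * (P (Y' ⁻¹' {b})).toReal)
          ≤ ((P (X' ⁻¹' {a} ∩ Y' ⁻¹' {b})).toReal
              / ((P (X' ⁻¹' {a})).toReal * (P (Y' ⁻¹' {b})).toReal))
            * ((P (X' ⁻¹' {a})).toReal * (P (Y' ⁻¹' {b})).toReal) :=
            mul_le_mul_of_nonneg_right hle h.le
        _ = (P (X' ⁻¹' {a} ∩ Y' ⁻¹' {b})).toReal := div_mul_cancel₀ _ h.ne'
  -- the surplus kernel
  set S : ℝ → ℝ → ℝ := fun a b => (P (X' ⁻¹' {a} ∩ Y' ⁻¹' {b})).toReal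
    - ψ' * ((P (X' ⁻¹' {a})).toReal * (P (Y' ⁻¹' {b})).toReal) with hSdef
  have hS0 : ∀ a b, 0 ≤ S a b := fun a b => sub_nonneg.mpr (hratio a b)
  have hSrow : ∀ a, ∑ b ∈ Y'.range, S a b = (1 - ψ') * (P (X' ⁻¹' {a})).toReal := by
    intro a
    rw [hSdef]
    rw [Finset.sum_sub_distrib, hmargX a]
    have : ∑ b ∈ Y'.range, ψ' * ((P (X' ⁻¹' {a})).toReal * (P (Y' ⁻¹' {b})).toReal)
        = ψ' * (P (X' ⁻¹' {a})).toReal * ∑ b ∈ Y'.range, (P (Y' ⁻¹' {b})).toReal := by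
      rw [Finset.mul_sum]
      exact Finset.sum_congr rfl fun b _ => by ring
    rw [this, hq1]; ring
  have hScol : ∀ b, ∑ a ∈ X'.range, S a b = (1 - ψ') * (P (Y' ⁻¹' {b})).toReal := by
    intro b
    rw [hSdef]
    rw [Finset.sum_sub_distrib, hmargY b]
    have : ∑ a ∈ X'.range, ψ' * ((P (X' ⁻¹' {a})).toReal * (P (Y' ⁻¹' {b})).toReal)
        = ψ' * (P (Y' ⁻¹' {b})).toReal * ∑ a ∈ X'.range, (P (X' ⁻¹' {a})).toReal := by
      rw [Finset.mul_sum]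
      exact Finset.sum_congr rfl fun a _ => by ring
    rw [this, hp1]; ring
  -- the covariance identity
  have hI : ∫ ω, X' ω * Y' ω ∂P = ∑ a ∈ X'.range, ∑ b ∈ Y'.range, (a * b) * S a b := by
    rw [aux_integral_mul P X' Y']
    have h2 : ∑ a ∈ X'.range, ∑ b ∈ Y'.range,
        (a * b) * (ψ' * ((P (X' ⁻¹' {a})).toReal * (P (Y' ⁻¹' {b})).toReal))
        = ψ' * ((∑ a ∈ X'.range, a * (P (X' ⁻¹' {a})).toReal)
            * (∑ b ∈ Y'.range, b * (P (Y' ⁻¹' {b})).toReal)) := by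
      rw [Finset.sum_mul_sum, Finset.mul_sum]
      refine Finset.sum_congr rfl fun a _ => ?_
      rw [Finset.mul_sum]
      exact Finset.sum_congr rfl fun b _ => by ring
    calc ∑ a ∈ X'.range, ∑ b ∈ Y'.range,
          (a * b) * (P (X' ⁻¹' {a} ∩ Y' ⁻¹' {b})).toReal
        = ∑ a ∈ X'.range, ∑ b ∈ Y'.range, ((a * b) * S a b
            + (a * b) * (ψ' * ((P (X' ⁻¹' {a})).toReal * (P (Y' ⁻¹' {b})).toReal))) := by
          refine Finset.sum_congr rfl fun a _ => Finset.sum_congr rfl fun b _ => ?_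
          rw [hSdef]; ring
      _ = (∑ a ∈ X'.range, ∑ b ∈ Y'.range, (a * b) * S a b)
          + ∑ a ∈ X'.range, ∑ b ∈ Y'.range,
              (a * b) * (ψ' * ((P (X' ⁻¹' {a})).toReal * (P (Y' ⁻¹' {b})).toReal)) := by
          rw [← Finset.sum_add_distrib]
          exact Finset.sum_congr rfl fun a _ => Finset.sum_add_distrib
      _ = ∑ a ∈ X'.range, ∑ b ∈ Y'.range, (a * b) * S a b := by
          rw [h2, hX0, hY0]; ring
  -- Cauchy–Schwarz on the surplus kernel
  have hSXnn : 0 ≤ ∑ a ∈ X'.range, a ^ 2 * (P (X' ⁻¹' {a})).toReal :=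
    Finset.sum_nonneg fun a _ => mul_nonneg (sq_nonneg _) ENNReal.toReal_nonneg
  have hSYnn : 0 ≤ ∑ b ∈ Y'.range, b ^ 2 * (P (Y' ⁻¹' {b})).toReal :=
    Finset.sum_nonneg fun b _ => mul_nonneg (sq_nonneg _) ENNReal.toReal_nonneg
  have hf : ∑ x ∈ X'.range ×ˢ Y'.range, x.1 ^ 2 * S x.1 x.2
      = (1 - ψ') * ∑ a ∈ X'.range, a ^ 2 * (P (X' ⁻¹' {a})).toReal := by
    rw [Finset.sum_product, Finset.mul_sum]
    refine Finset.sum_congr rfl fun a _ => ?_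
    dsimp only
    rw [← Finset.mul_sum, hSrow a]; ring
  have hg : ∑ x ∈ X'.range ×ˢ Y'.range, x.2 ^ 2 * S x.1 x.2
      = (1 - ψ') * ∑ b ∈ Y'.range, b ^ 2 * (P (Y' ⁻¹' {b})).toReal := by
    rw [Finset.sum_product, Finset.sum_comm, Finset.mul_sum]
    refine Finset.sum_congr rfl fun b _ => ?_
    dsimp only
    rw [← Finset.mul_sum, hScol b]; ring
  have hTnn : 0 ≤ ∑ x ∈ X'.range ×ˢ Y'.range, (|x.1| * |x.2|) * S x.1 x.2 :=
    Finset.sum_nonneg fun x _ =>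
      mul_nonneg (mul_nonneg (abs_nonneg _) (abs_nonneg _)) (hS0 x.1 x.2)
  have hCS : (∑ x ∈ X'.range ×ˢ Y'.range, (|x.1| * |x.2|) * S x.1 x.2) ^ 2
      ≤ ((1 - ψ') * ∑ a ∈ X'.range, a ^ 2 * (P (X' ⁻¹' {a})).toReal)
        * ((1 - ψ') * ∑ b ∈ Y'.range, b ^ 2 * (P (Y' ⁻¹' {b})).toReal) := by
    rw [← hf, ← hg]
    refine Finset.sum_sq_le_sum_mul_sum_of_sq_eq_mul (X'.range ×ˢ Y'.range)
      (fun x _ => mul_nonneg (sq_nonneg _) (hS0 x.1 x.2))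
      (fun x _ => mul_nonneg (sq_nonneg _) (hS0 x.1 x.2))
      (fun x _ => ?_)
    rw [mul_pow, mul_pow, sq_abs, sq_abs]; ring
  have hstep1 : |∫ ω, X' ω * Y' ω ∂P|
      ≤ ∑ x ∈ X'.range ×ˢ Y'.range, (|x.1| * |x.2|) * S x.1 x.2 := by
    rw [hI, ← Finset.sum_product']
    refine (Finset.abs_sum_le_sum_abs _ _).trans ?_
    refine Finset.sum_le_sum fun x _ => ?_
    rw [abs_mul, abs_mul, abs_of_nonneg (hS0 x.1 x.2)]
  have hψ1 : 0 ≤ 1 - ψ' := sub_nonneg.mpr hψle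
  have hstep2 : ∑ x ∈ X'.range ×ˢ Y'.range, (|x.1| * |x.2|) * S x.1 x.2
      ≤ (1 - ψ') * Real.sqrt (∑ a ∈ X'.range, a ^ 2 * (P (X' ⁻¹' {a})).toReal)
          * Real.sqrt (∑ b ∈ Y'.range, b ^ 2 * (P (Y' ⁻¹' {b})).toReal) := by
    have hrhs : 0 ≤ (1 - ψ') * Real.sqrt (∑ a ∈ X'.range, a ^ 2 * (P (X' ⁻¹' {a})).toReal)
        * Real.sqrt (∑ b ∈ Y'.range, b ^ 2 * (P (Y' ⁻¹' {b})).toReal) :=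
      mul_nonneg (mul_nonneg hψ1 (Real.sqrt_nonneg _)) (Real.sqrt_nonneg _)
    have hsq : ((1 - ψ') * Real.sqrt (∑ a ∈ X'.range, a ^ 2 * (P (X' ⁻¹' {a})).toReal)
        * Real.sqrt (∑ b ∈ Y'.range, b ^ 2 * (P (Y' ⁻¹' {b})).toReal)) ^ 2
        = ((1 - ψ') * ∑ a ∈ X'.range, a ^ 2 * (P (X' ⁻¹' {a})).toReal)
          * ((1 - ψ') * ∑ b ∈ Y'.range, b ^ 2 * (P (Y' ⁻¹' {b})).toReal) := by
      rw [mul_pow, mul_pow, Real.sq_sqrt hSXnn, Real.sq_sqrt hSYnn]; ring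
    calc ∑ x ∈ X'.range ×ˢ Y'.range, (|x.1| * |x.2|) * S x.1 x.2
        = Real.sqrt ((∑ x ∈ X'.range ×ˢ Y'.range, (|x.1| * |x.2|) * S x.1 x.2) ^ 2) :=
          (Real.sqrt_sq hTnn).symm
      _ ≤ Real.sqrt (((1 - ψ') * Real.sqrt (∑ a ∈ X'.range, a ^ 2 * (P (X' ⁻¹' {a})).toReal)
          * Real.sqrt (∑ b ∈ Y'.range, b ^ 2 * (P (Y' ⁻¹' {b})).toReal)) ^ 2) := by
          apply Real.sqrt_le_sqrt; rw [hsq]; exact hCS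
      _ = _ := Real.sqrt_sq hrhs
  have hNX : (eLpNorm (fun ω => X' ω) 2 P).toReal
      = Real.sqrt (∑ a ∈ X'.range, a ^ 2 * (P (X' ⁻¹' {a})).toReal) := by
    rw [aux_eLpNorm_two P X', aux_integral_comp P X' (fun x => x ^ 2)]
  have hNY : (eLpNorm (fun ω => Y' ω) 2 P).toReal
      = Real.sqrt (∑ b ∈ Y'.range, b ^ 2 * (P (Y' ⁻¹' {b})).toReal) := by
    rw [aux_eLpNorm_two P Y', aux_integral_comp P Y' (fun x => x ^ 2)]
  rw [hNX, hNY]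
  exact hstep1.trans hstep2
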